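/- Let S be a multiset of m points drawn independently and uniformly at random from a nonempty finite set P ⊆ R^d, and let Γ(S) be the mean of S. Then the expected value of Σ_{p∈P} ||p - Γ(S)||^2 equals (1 + 1/m) · Δ_1(P), where Δ_1(P) = Σ_{p∈P} ||p - μ(P)||^2. -/

import Mathlib

open Finset
open scoped RealInnerProductSpace

private lemma aux_bias_var {V : Type*} [NormedAddCommGroup V] [InnerProductSpace ℝ V]
    (P : Finset V) (hP : P.Nonempty) (v : V) :
    ∑ p ∈ P, ‖p - v‖ ^ 2
      = ∑ p ∈ P, ‖p - ((P.card : ℝ)⁻¹ • ∑ q ∈ P, q)‖ ^ 2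
        + (P.card : ℝ) * ‖((P.card : ℝ)⁻¹ • ∑ q ∈ P, q) - v‖ ^ 2 := by
  set μ : V := ((P.card : ℝ)⁻¹ • ∑ q ∈ P, q) with hμ
  have hn : (P.card : ℝ) ≠ 0 := by
    exact_mod_cast (Finset.card_pos.mpr hP).ne'
  have hzero : ∑ p ∈ P, (p - μ) = 0 := by
    rw [Finset.sum_sub_distrib, Finset.sum_const, hμ, ← Nat.cast_smul_eq_nsmul ℝ,
      smul_inv_smul₀ hn, sub_self]
  have key : ∀ p ∈ P, ‖p - v‖ ^ 2 = ‖p - μ‖ ^ 2 + 2 * ⟪p - μ, μ - v⟫ + ‖μ - v‖ ^ 2 := by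
    intro p _
    rw [← norm_add_sq_real, sub_add_sub_cancel]
  rw [Finset.sum_congr rfl key]
  rw [Finset.sum_add_distrib, Finset.sum_add_distrib, Finset.sum_const,
    nsmul_eq_mul]
  have : ∑ p ∈ P, 2 * ⟪p - μ, μ - v⟫ = 0 := by
    rw [← Finset.mul_sum, ← sum_inner, hzero, inner_zero_left, mul_zero]
  rw [this, add_zero, mul_comm]

private lemma aux_var {V : Type*} [NormedAddCommGroup V] [InnerProductSpace ℝ V]
    {α : Type*} [Fintype α] (c : α → V) (hc : ∑ a, c a = 0) (k : ℕ) :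
    ∑ s : Fin (k + 1) → α, ‖∑ i, c (s i)‖ ^ 2
      = ((k : ℝ) + 1) * (Fintype.card α : ℝ) ^ k * ∑ a, ‖c a‖ ^ 2 := by
  induction k with
  | zero =>
    rw [Fintype.sum_equiv (Equiv.funUnique (Fin 1) α)
      (fun s => ‖∑ i, c (s i)‖ ^ 2) (fun a => ‖c a‖ ^ 2)
      (fun s => by simp [Fin.sum_univ_one])]
    simp
  | succ k ih =>
    rw [← Fintype.sum_equiv (Fin.consEquiv (fun _ : Fin (k + 2) => α)) _
      (fun s => ‖∑ i, c (s i)‖ ^ 2) (fun s => rfl)]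
    have expand : ∀ (x : α × (Fin (k + 1) → α)),
        ‖∑ i, c ((Fin.consEquiv (fun _ : Fin (k + 2) => α)) x i)‖ ^ 2
          = ‖c x.1‖ ^ 2 + 2 * ⟪c x.1, ∑ i, c (x.2 i)⟫ + ‖∑ i, c (x.2 i)‖ ^ 2 := by
      rintro ⟨a, t⟩
      rw [Fin.sum_univ_succ]
      simp only [Fin.consEquiv_apply, Fin.cons_zero, Fin.cons_succ]
      rw [norm_add_sq_real]
    rw [Fintype.sum_prod_type]
    simp only [expand]
    simp only [Finset.sum_add_distrib]
    have h1 : ∑ a : α, ∑ t : Fin (k+1) → α, ‖c a‖ ^ 2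
        = (Fintype.card α : ℝ) ^ (k + 1) * ∑ a, ‖c a‖ ^ 2 := by
      simp [Finset.sum_const, card_univ, Finset.mul_sum, mul_comm]
    have h2 : ∑ a : α, ∑ t : Fin (k+1) → α, 2 * ⟪c a, ∑ i, c (t i)⟫ = 0 := by
      have step : ∀ a : α, ∑ t : Fin (k+1) → α, 2 * ⟪c a, ∑ i, c (t i)⟫
          = 2 * ⟪c a, ∑ t : Fin (k+1) → α, ∑ i, c (t i)⟫ := by
        intro a; rw [← Finset.mul_sum, ← inner_sum]
      simp only [step]
      rw [← Finset.mul_sum, ← sum_inner, hc, inner_zero_left, mul_zero]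
    have h3 : ∑ a : α, ∑ t : Fin (k+1) → α, ‖∑ i, c (t i)‖ ^ 2
        = (Fintype.card α : ℝ) * (((k : ℝ) + 1) * (Fintype.card α : ℝ) ^ k * ∑ a, ‖c a‖ ^ 2) := by
      rw [Finset.sum_const, card_univ, ih, nsmul_eq_mul]
    rw [h1, h2, h3]
    push_cast
    ring

/-- Expected 1-means cost of the mean of `m` i.i.d. uniform samples from `P`:
the average over all `m`-tuples `s` from `P` of `∑_{p∈P} ‖p - Γ(s)‖²` equals
`(1 + 1/m) · Δ₁(P)` where `Δ₁(P) = ∑_{p∈P} ‖p - μ(P)‖²`. -/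
theorem expected_cost_of_sample_mean {d : ℕ} (P : Finset (EuclideanSpace ℝ (Fin d)))
    (hP : P.Nonempty) (m : ℕ) (hm : 1 ≤ m) :
    (∑ s : Fin m → {x // x ∈ P},
        ∑ p ∈ P, ‖p - ((m : ℝ)⁻¹ • ∑ i, ((s i : EuclideanSpace ℝ (Fin d))))‖ ^ 2)
        / (P.card : ℝ) ^ m =
      (1 + 1 / (m : ℝ)) * ∑ p ∈ P, ‖p - ((P.card : ℝ)⁻¹ • ∑ q ∈ P, q)‖ ^ 2 := by
  obtain ⟨k, rfl⟩ : ∃ k, m = k + 1 := ⟨m - 1, (Nat.succ_pred_eq_of_pos hm).symm⟩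
  have hn0 : (P.card : ℝ) ≠ 0 := by exact_mod_cast (Finset.card_pos.mpr hP).ne'
  have hm0 : ((k + 1 : ℕ) : ℝ) ≠ 0 := by positivity
  set μ : EuclideanSpace ℝ (Fin d) := ((P.card : ℝ)⁻¹ • ∑ q ∈ P, q) with hμ
  set Δ : ℝ := ∑ p ∈ P, ‖p - μ‖ ^ 2 with hΔ
  set c : {x // x ∈ P} → EuclideanSpace ℝ (Fin d) :=
    fun a => (a : EuclideanSpace ℝ (Fin d)) - μ with hcdef
  have hcsum : ∑ a : {x // x ∈ P}, c a = 0 := by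
    rw [hcdef]
    rw [Finset.sum_sub_distrib, Finset.sum_coe_sort P (fun x => x), Finset.sum_const,
      Finset.card_univ, Fintype.card_coe, hμ, ← Nat.cast_smul_eq_nsmul ℝ, smul_inv_smul₀ hn0, sub_self]
  have hvar := aux_var c hcsum k
  have hcard : Fintype.card {x // x ∈ P} = P.card := Fintype.card_coe P
  have hΔ' : ∑ a : {x // x ∈ P}, ‖c a‖ ^ 2 = Δ := by
    rw [hcdef, hΔ, Finset.sum_coe_sort P (fun x => ‖x - μ‖ ^ 2)]
  rw [hcard, hΔ'] at hvar
  have key : ∀ s : Fin (k+1) → {x // x ∈ P},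
      ∑ p ∈ P, ‖p - (((k+1 : ℕ) : ℝ)⁻¹ • ∑ i, ((s i : EuclideanSpace ℝ (Fin d))))‖ ^ 2
        = Δ + (P.card : ℝ) * ((((k+1 : ℕ) : ℝ)⁻¹) ^ 2 * ‖∑ i, c (s i)‖ ^ 2) := by
    intro s
    rw [aux_bias_var P hP]
    congr 1
    have hrw : μ - (((k+1 : ℕ) : ℝ)⁻¹ • ∑ i, ((s i : EuclideanSpace ℝ (Fin d))))
        = -((((k+1 : ℕ) : ℝ)⁻¹) • ∑ i, c (s i)) := by
      rw [hcdef]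
      simp only
      rw [Finset.sum_sub_distrib, Finset.sum_const, Finset.card_univ, Fintype.card_fin,
        smul_sub, ← Nat.cast_smul_eq_nsmul ℝ, inv_smul_smul₀ hm0, neg_sub]
    rw [hrw, norm_neg, norm_smul, Real.norm_eq_abs, abs_of_nonneg (by positivity), mul_pow]
  rw [Finset.sum_congr rfl (fun s _ => key s), Finset.sum_add_distrib, Finset.sum_const,
    Finset.card_univ]
  rw [show Fintype.card (Fin (k+1) → {x // x ∈ P}) = P.card ^ (k + 1) by
    rw [Fintype.card_fun, hcard, Fintype.card_fin]]
  rw [← Finset.mul_sum, ← Finset.mul_sum, hvar, nsmul_eq_mul]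
  rw [div_eq_iff (pow_ne_zero _ hn0)]
  have hk1 : ((k + 1 : ℕ) : ℝ) = (k : ℝ) + 1 := by push_cast; ring
  rw [hk1]
  have hkne : (k : ℝ) + 1 ≠ 0 := by positivity
  field_simp
  push_cast
  ring
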